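/- Let a > 0, let f, g : [-a,a] → ℝ be continuous, let ρ ≠ 0, and let x : [-a,a] → ℝ be a differentiable function with x(t) ≠ 0 for all t ∈ [-a,a] and x(-a) = ρ. Then x satisfies the Abel equation x'(t) = f(t)x(t)^3 + g(t)x(t)^2 for all t ∈ [-a,a] if and only if for every t ∈ [-a,a] one has ρ ∫_{-a}^t (f(s)x(s) + g(s)) ds ≠ 1 and x(t) = ρ / (1 − ρ ∫_{-a}^t (f(s)x(s) + g(s)) ds). -/

import Mathlib

open Set intervalIntegral

/-- FTC: the integral of a function continuous on `[a,b]` has derivative within `[a,b]`. -/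
lemma ftc_icc {a b : ℝ} {h : ℝ → ℝ} (hc : ContinuousOn h (Set.Icc a b))
    {t : ℝ} (ht : t ∈ Set.Icc a b) :
    HasDerivWithinAt (fun u => ∫ s in a..u, h s) (h t) (Set.Icc a b) t := by
  haveI : Fact (t ∈ Set.Icc a b) := ⟨ht⟩
  have hint : IntervalIntegrable h MeasureTheory.volume a t := by
    apply ContinuousOn.intervalIntegrable
    apply hc.mono
    rw [Set.uIcc_of_le ht.1]
    exact Set.Icc_subset_Icc le_rfl ht.2
  have hmeas : StronglyMeasurableAtFilter h (nhdsWithin t (Set.Icc a b)) :=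
    ⟨Set.Icc a b, self_mem_nhdsWithin, hc.aestronglyMeasurable measurableSet_Icc⟩
  exact intervalIntegral.integral_hasDerivWithinAt_right hint hmeas (hc t ht)

theorem abel_equiv_integral_equation
    (a ρ : ℝ) (ha : 0 < a) (f g x x' : ℝ → ℝ)
    (hf : ContinuousOn f (Set.Icc (-a) a)) (hg : ContinuousOn g (Set.Icc (-a) a))
    (hρ : ρ ≠ 0)
    (hx : ∀ t ∈ Set.Icc (-a) a, HasDerivWithinAt x (x' t) (Set.Icc (-a) a) t)
    (hx0 : ∀ t ∈ Set.Icc (-a) a, x t ≠ 0)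
    (hxa : x (-a) = ρ) :
    (∀ t ∈ Set.Icc (-a) a, x' t = f t * x t ^ 3 + g t * x t ^ 2) ↔
      (∀ t ∈ Set.Icc (-a) a,
        ρ * (∫ s in (-a)..t, (f s * x s + g s)) ≠ 1 ∧
        x t = ρ / (1 - ρ * ∫ s in (-a)..t, (f s * x s + g s))) := by
  have haa : (-a : ℝ) < a := by linarith
  have hxc : ContinuousOn x (Set.Icc (-a) a) := fun t ht => (hx t ht).continuousWithinAt
  have hh : ContinuousOn (fun s => f s * x s + g s) (Set.Icc (-a) a) := (hf.mul hxc).add hg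
  set F : ℝ → ℝ := fun t => ∫ s in (-a)..t, (f s * x s + g s) with hF
  have hFderiv : ∀ t ∈ Set.Icc (-a) a,
      HasDerivWithinAt F (f t * x t + g t) (Set.Icc (-a) a) t := fun t ht => ftc_icc hh ht
  constructor
  · intro habel
    -- φ = 1/x + F is constant
    have hφ : ∀ t ∈ Set.Icc (-a) a,
        HasDerivWithinAt (fun u => (x u)⁻¹ + F u) 0 (Set.Icc (-a) a) t := by
      intro t ht
      have h1 := ((hx t ht).inv (hx0 t ht)).add (hFderiv t ht)
      have : -x' t / x t ^ 2 + (f t * x t + g t) = 0 := by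
        rw [habel t ht]
        field_simp [hx0 t ht]
        ring
      rwa [this] at h1
    have hconst : ∀ t ∈ Set.Icc (-a) a, (x t)⁻¹ + F t = (x (-a))⁻¹ + F (-a) := by
      intro t ht
      apply constant_of_has_deriv_right_zero (f := fun u => (x u)⁻¹ + F u)
      · intro u hu
        exact ((hφ u hu).continuousWithinAt)
      · intro u hu
        apply (hφ u ⟨hu.1, le_of_lt hu.2⟩).mono_of_mem_nhdsWithin
        have h1 : Set.Iic a ∈ nhdsWithin u (Set.Ici u) :=
          mem_nhdsWithin_of_mem_nhds (Iic_mem_nhds hu.2)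
        filter_upwards [h1, self_mem_nhdsWithin] with v hv1 hv2
        exact ⟨le_trans hu.1 hv2, hv1⟩
      · exact ht
    intro t ht
    have hxt0 := hx0 t ht
    have key : (x t)⁻¹ = ρ⁻¹ - F t := by
      have h1 := hconst t ht
      rw [hxa] at h1
      have h2 : F (-a) = 0 := intervalIntegral.integral_same
      rw [h2] at h1; linarith
    have hne : ρ * F t ≠ 1 := by
      intro heq
      apply hxt0
      have hFt : F t = ρ⁻¹ := by field_simp; linarith [heq]
      rw [← inv_eq_zero, key, hFt, sub_self]
    refine ⟨hne, ?_⟩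
    rw [eq_div_iff (sub_ne_zero.mpr (Ne.symm hne))]
    have h1 : x t * (ρ⁻¹ - F t) = 1 := by rw [← key]; exact mul_inv_cancel₀ hxt0
    calc x t * (1 - ρ * F t) = ρ * (x t * (ρ⁻¹ - F t)) := by
          rw [show ρ * (x t * (ρ⁻¹ - F t)) = x t * (ρ * ρ⁻¹ - ρ * F t) from by ring,
            mul_inv_cancel₀ hρ]
      _ = ρ := by rw [h1, mul_one]
  · intro H t ht
    obtain ⟨hne, hxt⟩ := H t ht
    have hGne : 1 - ρ * F t ≠ 0 := sub_ne_zero.mpr (Ne.symm hne)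
    have hG : HasDerivWithinAt (fun u => 1 - ρ * F u) (-(ρ * (f t * x t + g t)))
        (Set.Icc (-a) a) t := by
      simpa using (((hFderiv t ht).const_mul ρ).const_sub 1)
    have hy : HasDerivWithinAt (fun u => ρ / (1 - ρ * F u))
        (ρ * (ρ * (f t * x t + g t)) / (1 - ρ * F t) ^ 2) (Set.Icc (-a) a) t := by
      have := (hG.inv hGne).const_mul ρ
      exact (this.congr_deriv (by ring)).congr (fun u _ => by simp [div_eq_mul_inv])
        (by simp [div_eq_mul_inv])
    have hxy : HasDerivWithinAt x
        (ρ * (ρ * (f t * x t + g t)) / (1 - ρ * F t) ^ 2) (Set.Icc (-a) a) t :=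
      hy.congr (fun u hu => (H u hu).2) hxt
    have hud : UniqueDiffWithinAt ℝ (Set.Icc (-a) a) t := (uniqueDiffOn_Icc haa) t ht
    have heq : x' t = ρ * (ρ * (f t * x t + g t)) / (1 - ρ * F t) ^ 2 := by
      rw [← (hx t ht).derivWithin hud, (hxy).derivWithin hud]
    rw [heq, hxt]
    field_simp
    ring
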